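/- Let S > 0, I_i > 0 for i in a finite nonempty set K', and let λ(T) be any function of T > 0 such that ∑_{i∈K'} I_i·(λ(T) − 2·log I_i)/(T+S) + σ_b·√(∑_{i∈K'} I_i²·(λ(T) − 2·log I_i)²/(σᵢ²·(T+S)²)) = 1 for all T (the normalization constraint), with λ(T) − 2·log I_i ≥ 0 for all i. Define α_i(T) = (λ(T) − 2·log I_i)/(1 + T/S). Suppose additionally that wᵢ* = I_i/S satisfies ∑_{i∈K'} wᵢ* + σ_b·√(∑_{i∈K'} (wᵢ*)²/σᵢ²) = 1. Then α_i(T) → 1 as T → ∞ for every i ∈ K'. -/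

import Mathlib

open Filter

theorem alpha_tendsto_one {ι : Type*} (K' : Finset ι) (hK' : K'.Nonempty)
    (I σ : ι → ℝ) (σb S : ℝ) (lam : ℝ → ℝ)
    (hI : ∀ i ∈ K', 0 < I i) (hσ : ∀ i ∈ K', 0 < σ i) (hσb : 0 < σb) (hS : 0 < S)
    (hnorm : ∀ T > 0,
      ∑ i ∈ K', I i * (lam T - 2 * Real.log (I i)) / (T + S) +
        σb * Real.sqrt (∑ i ∈ K',
          (I i)^2 * (lam T - 2 * Real.log (I i))^2 / ((σ i)^2 * (T + S)^2)) = 1)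
    (hfeas : ∀ T > 0, ∀ i ∈ K', 0 ≤ lam T - 2 * Real.log (I i))
    (hstar : ∑ i ∈ K', I i / S +
      σb * Real.sqrt (∑ i ∈ K', (I i / S)^2 / (σ i)^2) = 1) :
    ∀ i ∈ K',
      Tendsto (fun T : ℝ => (lam T - 2 * Real.log (I i)) / (1 + T / S))
        atTop (nhds 1) := by
  intro i hi
  set A : ℝ := ∑ j ∈ K', (I j)^2 / (σ j)^2 with hA
  have hA0 : 0 ≤ A := Finset.sum_nonneg fun j hj => by positivity
  -- key identity: G(y) = y * C for y ≥ 0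
  have key : ∀ y : ℝ, 0 ≤ y →
      ∑ j ∈ K', I j * y + σb * Real.sqrt (∑ j ∈ K', (I j)^2 * y^2 / (σ j)^2)
        = y * (∑ j ∈ K', I j + σb * Real.sqrt A) := by
    intro y hy
    have h1 : ∑ j ∈ K', (I j)^2 * y^2 / (σ j)^2 = y^2 * A := by
      rw [hA, Finset.mul_sum]
      exact Finset.sum_congr rfl fun j hj => by ring
    rw [h1, Real.sqrt_mul (sq_nonneg y), Real.sqrt_sq hy, ← Finset.sum_mul]
    ring
  have hCS : (∑ j ∈ K', I j) + σb * Real.sqrt A = S := by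
    have h := key (1/S) (by positivity)
    have e1 : ∑ j ∈ K', I j * (1/S) = ∑ j ∈ K', I j / S :=
      Finset.sum_congr rfl fun j _ => by ring
    have e2 : ∑ j ∈ K', (I j)^2 * (1/S)^2 / (σ j)^2
        = ∑ j ∈ K', (I j / S)^2 / (σ j)^2 :=
      Finset.sum_congr rfl fun j _ => by ring
    rw [e1, e2, hstar] at h
    have hS' : S ≠ 0 := hS.ne'
    field_simp at h
    linarith
  set M : ℝ := K'.sup' hK' (fun j => |2 * Real.log (I j)|) with hMdef
  have hM : ∀ j ∈ K', |2 * Real.log (I j)| ≤ M := fun j hj =>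
    hMdef ▸ Finset.le_sup' (fun j => |2 * Real.log (I j)|) hj
  have hM0 : 0 ≤ M := le_trans (abs_nonneg _) (hM _ hK'.choose_spec)
  -- main bound
  have bound : ∀ T : ℝ, 0 < T →
      |(lam T - 2 * Real.log (I i)) / (1 + T / S) - 1| ≤ 2 * S * M / (T + S) := by
    intro T hT
    have hTS : 0 < T + S := by linarith
    set u : ι → ℝ := fun j => (lam T - 2 * Real.log (I j)) / (T + S) with hu
    have hu0 : ∀ j ∈ K', 0 ≤ u j := fun j hj =>
      div_nonneg (hfeas T hT j hj) hTS.le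
    have hnorm' : ∑ j ∈ K', I j * u j +
        σb * Real.sqrt (∑ j ∈ K', (I j)^2 * (u j)^2 / (σ j)^2) = 1 := by
      have e1 : ∑ j ∈ K', I j * u j
          = ∑ j ∈ K', I j * (lam T - 2 * Real.log (I j)) / (T + S) :=
        Finset.sum_congr rfl fun j _ => by simp only [hu]; ring
      have e2 : ∑ j ∈ K', (I j)^2 * (u j)^2 / (σ j)^2
          = ∑ j ∈ K', (I j)^2 * (lam T - 2 * Real.log (I j))^2 / ((σ j)^2 * (T + S)^2) := by
        refine Finset.sum_congr rfl fun j _ => ?_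
        simp only [hu]
        field_simp
      rw [e1, e2]
      exact hnorm T hT
    set x : ℝ := lam T / (T + S) with hx
    set ε : ℝ := 1 / (T + S) with hε
    have hε0 : 0 < ε := by positivity
    have huxe : ∀ j ∈ K', u j = x - (2 * Real.log (I j)) * ε := by
      intro j hj
      simp only [hu, hx, hε]
      rw [sub_div]
      ring
    have hub : ∀ j ∈ K', u j ≤ x + M * ε := by
      intro j hj
      rw [huxe j hj]
      have h1 : -(2 * Real.log (I j)) ≤ M := (neg_le_abs _).trans (hM j hj)
      nlinarith
    have hlb : ∀ j ∈ K', x - M * ε ≤ u j := by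
      intro j hj
      rw [huxe j hj]
      have h1 : 2 * Real.log (I j) ≤ M := (le_abs_self _).trans (hM j hj)
      nlinarith
    have hy2nn : 0 ≤ x + M * ε := le_trans (hu0 i hi) (hub i hi)
    -- upper bound on the normalization sum using y₂ = x + M ε
    have hup : 1 ≤ (x + M * ε) * S := by
      rw [← hCS, ← key (x + M * ε) hy2nn, ← hnorm']
      have h1 : ∑ j ∈ K', I j * u j ≤ ∑ j ∈ K', I j * (x + M * ε) :=
        Finset.sum_le_sum fun j hj =>
          mul_le_mul_of_nonneg_left (hub j hj) (hI j hj).le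
      have h2 : Real.sqrt (∑ j ∈ K', (I j)^2 * (u j)^2 / (σ j)^2)
          ≤ Real.sqrt (∑ j ∈ K', (I j)^2 * (x + M * ε)^2 / (σ j)^2) := by
        apply Real.sqrt_le_sqrt
        refine Finset.sum_le_sum fun j hj => ?_
        have h3 := hu0 j hj
        have h4 := hub j hj
        have h5 := hσ j hj
        gcongr
      nlinarith [mul_le_mul_of_nonneg_left h2 hσb.le]
    -- lower bound using y₁ = max (x - M ε) 0
    set y1 : ℝ := max (x - M * ε) 0 with hy1
    have hy1nn : 0 ≤ y1 := le_max_right _ _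
    have hy1le : ∀ j ∈ K', y1 ≤ u j := fun j hj => max_le (hlb j hj) (hu0 j hj)
    have hlo : y1 * S ≤ 1 := by
      rw [← hCS, ← key y1 hy1nn, ← hnorm']
      have h1 : ∑ j ∈ K', I j * y1 ≤ ∑ j ∈ K', I j * u j :=
        Finset.sum_le_sum fun j hj =>
          mul_le_mul_of_nonneg_left (hy1le j hj) (hI j hj).le
      have h2 : Real.sqrt (∑ j ∈ K', (I j)^2 * y1^2 / (σ j)^2)
          ≤ Real.sqrt (∑ j ∈ K', (I j)^2 * (u j)^2 / (σ j)^2) := by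
        apply Real.sqrt_le_sqrt
        refine Finset.sum_le_sum fun j hj => ?_
        have h3 := hy1le j hj
        have h5 := hσ j hj
        gcongr
      nlinarith [mul_le_mul_of_nonneg_left h2 hσb.le]
    have hxup : x - M * ε ≤ 1 / S := by
      have h1 : (x - M * ε) * S ≤ 1 := le_trans
        (mul_le_mul_of_nonneg_right (le_max_left _ _) hS.le) hlo
      rw [le_div_iff₀ hS]
      linarith
    have hxlo : 1 / S ≤ x + M * ε := by
      rw [div_le_iff₀ hS]
      linarith
    -- rewrite α in terms of u i
    have halpha : (lam T - 2 * Real.log (I i)) / (1 + T / S) = S * u i := by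
      simp only [hu]
      have h1 : (0:ℝ) < 1 + T / S := by positivity
      field_simp
      ring
    rw [halpha, huxe i hi]
    have hL : |2 * Real.log (I i)| ≤ M := hM i hi
    have hL1 : -(M) ≤ 2 * Real.log (I i) := by
      have := neg_abs_le (2 * Real.log (I i)); linarith
    have hL2 : 2 * Real.log (I i) ≤ M := (le_abs_self _).trans hL
    have hεeq : 2 * S * M / (T + S) = 2 * S * M * ε := by rw [hε]; ring
    rw [hεeq, abs_le]
    have h6 : S * (1 / S) = 1 := by field_simp
    have h7 := mul_le_mul_of_nonneg_left hxup hS.le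
    have h8 := mul_le_mul_of_nonneg_left hxlo hS.le
    rw [mul_sub, h6] at h7
    rw [mul_add, h6] at h8
    have hexp : S * (x - 2 * Real.log (I i) * ε)
        = S * x - S * (ε * (2 * Real.log (I i))) := by ring
    have hB1 : S * (ε * (2 * Real.log (I i))) ≤ S * (ε * M) :=
      mul_le_mul_of_nonneg_left (mul_le_mul_of_nonneg_left hL2 hε0.le) hS.le
    have hB2 : S * (ε * (-M)) ≤ S * (ε * (2 * Real.log (I i))) :=
      mul_le_mul_of_nonneg_left (mul_le_mul_of_nonneg_left hL1 hε0.le) hS.le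
    have e1 : S * (M * ε) = S * (ε * M) := by ring
    have e2 : 2 * S * M * ε = 2 * (S * (ε * M)) := by ring
    have e3 : S * (ε * (-M)) = -(S * (ε * M)) := by ring
    rw [e1] at h7 h8
    rw [e3] at hB2
    constructor <;> rw [hexp, e2] <;> linarith
  -- conclude via squeeze
  have hg : Tendsto (fun T : ℝ => 2 * S * M / (T + S)) atTop (nhds 0) :=
    Tendsto.div_atTop tendsto_const_nhds (tendsto_atTop_add_const_right _ S tendsto_id)
  have h0 : Tendsto (fun T : ℝ =>
      (lam T - 2 * Real.log (I i)) / (1 + T / S) - 1) atTop (nhds 0) := by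
    refine squeeze_zero_norm' ?_ hg
    filter_upwards [eventually_gt_atTop 0] with T hT
    simpa using bound T hT
  have := h0.add (tendsto_const_nhds (x := (1:ℝ)))
  simpa using this
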